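/- Let G be a finite group, ℓ a prime dividing |G|, and Z a central ℓ-subgroup of G. Let Δ(S_ℓ(G,Z)) be the simplicial complex whose n-simplices are chains Z = P₀ < P₁ < ⋯ < Pₙ of ℓ-subgroups of G starting at Z, and let Δ(Ab_{ℓ,Z}(G,Z)) be the subcomplex of chains all of whose terms P satisfy that P/Z is abelian. Then for every group A of automorphisms of G stabilizing Z, there exists an A-equivariant alternation of Δ(Ab_{ℓ,Z}(G,Z)) in Δ(S_ℓ(G,Z)): a map φ on the set of chains in Δ(S_ℓ(G,Z)) whose top term Pₙ has non-abelian quotient Pₙ/Z, satisfying φ² = id, |φ(σ)| = |σ| ± 1, φ commutes with the action of A, and φ preserves the stabilizer (the top term of φ(σ) equals Pₙ). -/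

import Mathlib

/-- `P/Z` is abelian, expressed by commutators of elements of `P` lying in `Z`. -/
def AbelianModulo {G : Type*} [Group G] (P Z : Subgroup G) : Prop :=
  ∀ p ∈ P, ∀ q ∈ P, p * q * p⁻¹ * q⁻¹ ∈ Z

/-- A chain of `ℓ`-subgroups of `G` starting at `Z`: a finite totally ordered set of
`ℓ`-subgroups of `G` containing `Z`, all of which contain `Z`. -/
def IsEllChain {G : Type*} [Group G] (ℓ : ℕ) (Z : Subgroup G)
    (σ : Finset (Subgroup G)) : Prop :=
  Z ∈ σ ∧ (∀ P ∈ σ, Z ≤ P ∧ IsPGroup ℓ P) ∧ IsChain (· ≤ ·) (σ : Set (Subgroup G))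

open Subgroup Finset

section Defs

variable {G : Type*} [Group G]

/-- The commutator subgroup of the top of a chain. -/
noncomputable def phiD (σ : Finset (Subgroup G)) : Subgroup G := ⁅σ.sup id, σ.sup id⁆

open Classical in
/-- The largest member of the chain not containing `phiD σ`. -/
noncomputable def phiB (σ : Finset (Subgroup G)) : Subgroup G :=
  (σ.filter fun Q => ¬ phiD σ ≤ Q).sup id

open Classical in
/-- The smallest member of the chain containing `phiD σ`. -/
noncomputable def phiT (σ : Finset (Subgroup G)) : Subgroup G :=
  (σ.filter fun Q => phiD σ ≤ Q).inf id

open Classical in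
/-- The alternation map. -/
noncomputable def phi [DecidableEq (Subgroup G)] (σ : Finset (Subgroup G)) :
    Finset (Subgroup G) :=
  if phiD σ ⊔ phiB σ < phiT σ then insert (phiD σ ⊔ phiB σ) σ else σ.erase (phiT σ)

lemma sup_id_eq {σ : Finset (Subgroup G)} {P : Subgroup G} (hP : P ∈ σ)
    (htop : ∀ Q ∈ σ, Q ≤ P) : σ.sup id = P :=
  le_antisymm (Finset.sup_le htop) (Finset.le_sup (f := id) hP)

lemma phiD_eq {σ : Finset (Subgroup G)} {P : Subgroup G} (hP : P ∈ σ)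
    (htop : ∀ Q ∈ σ, Q ≤ P) : phiD σ = ⁅P, P⁆ := by
  rw [phiD, sup_id_eq hP htop]

lemma phiB_eq {σ : Finset (Subgroup G)} {X : Subgroup G} (hX : X ∈ σ)
    (hX2 : ¬ phiD σ ≤ X) (hX3 : ∀ Q ∈ σ, ¬ phiD σ ≤ Q → Q ≤ X) : phiB σ = X := by
  classical
  refine le_antisymm (Finset.sup_le fun Q hQ => ?_) ?_
  · rw [Finset.mem_filter] at hQ; exact hX3 Q hQ.1 hQ.2
  · exact Finset.le_sup (f := id) (Finset.mem_filter.mpr ⟨hX, hX2⟩)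

lemma phiT_eq {σ : Finset (Subgroup G)} {X : Subgroup G} (hX : X ∈ σ)
    (hX2 : phiD σ ≤ X) (hX3 : ∀ Q ∈ σ, phiD σ ≤ Q → X ≤ Q) : phiT σ = X := by
  classical
  refine le_antisymm ?_ (Finset.le_inf fun Q hQ => ?_)
  · exact Finset.inf_le (Finset.mem_filter.mpr ⟨hX, hX2⟩)
  · rw [Finset.mem_filter] at hQ; exact hX3 Q hQ.1 hQ.2

lemma chain_sup_mem {s : Finset (Subgroup G)} (hc : IsChain (· ≤ ·) (s : Set (Subgroup G)))
    (hs : s.Nonempty) : s.sup id ∈ s := by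
  have h := Finset.sup'_mem (s : Set (Subgroup G))
    (fun x hx y hy => by
      rcases eq_or_ne x y with rfl | hne
      · simpa using hx
      rcases hc hx hy hne with h | h
      · simpa [sup_eq_right.mpr h] using hy
      · simpa [sup_eq_left.mpr h] using hx)
    s hs id (fun i hi => hi)
  rwa [Finset.sup'_eq_sup] at h

lemma chain_inf_mem {s : Finset (Subgroup G)} (hc : IsChain (· ≤ ·) (s : Set (Subgroup G)))
    (hs : s.Nonempty) : s.inf id ∈ s := by
  have h := Finset.inf'_mem (s : Set (Subgroup G))
    (fun x hx y hy => by
      rcases eq_or_ne x y with rfl | hne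
      · simpa using hx
      rcases hc hx hy hne with h | h
      · simpa [inf_eq_left.mpr h] using hx
      · simpa [inf_eq_right.mpr h] using hy)
    s hs id (fun i hi => hi)
  rwa [Finset.inf'_eq_inf] at h

lemma phiB_spec {σ : Finset (Subgroup G)} (hc : IsChain (· ≤ ·) (σ : Set (Subgroup G)))
    (hne : ∃ Q ∈ σ, ¬ phiD σ ≤ Q) :
    phiB σ ∈ σ ∧ ¬ phiD σ ≤ phiB σ ∧ ∀ Q ∈ σ, ¬ phiD σ ≤ Q → Q ≤ phiB σ := by
  classical
  obtain ⟨Q0, hQ0, hQ0'⟩ := hne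
  set t := σ.filter fun Q => ¬ phiD σ ≤ Q with ht
  have htsub : (t : Set (Subgroup G)) ⊆ (σ : Set (Subgroup G)) := by
    intro x hx; simpa using (Finset.mem_filter.mp hx).1
  have hmem : t.sup id ∈ t :=
    chain_sup_mem (hc.mono htsub) ⟨Q0, Finset.mem_filter.mpr ⟨hQ0, hQ0'⟩⟩
  have hBt : phiB σ ∈ t := by
    rw [phiB]; convert hmem using 2
  rw [Finset.mem_filter] at hBt
  refine ⟨hBt.1, hBt.2, fun Q hQ hQ' => ?_⟩
  have : Q ∈ t := Finset.mem_filter.mpr ⟨hQ, hQ'⟩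
  have h := Finset.le_sup (f := id) this
  rw [phiB]; convert h using 1; rfl

lemma phiT_spec {σ : Finset (Subgroup G)} (hc : IsChain (· ≤ ·) (σ : Set (Subgroup G)))
    (hne : ∃ Q ∈ σ, phiD σ ≤ Q) :
    phiT σ ∈ σ ∧ phiD σ ≤ phiT σ ∧ ∀ Q ∈ σ, phiD σ ≤ Q → phiT σ ≤ Q := by
  classical
  obtain ⟨Q0, hQ0, hQ0'⟩ := hne
  set t := σ.filter fun Q => phiD σ ≤ Q with ht
  have htsub : (t : Set (Subgroup G)) ⊆ (σ : Set (Subgroup G)) := by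
    intro x hx; simpa using (Finset.mem_filter.mp hx).1
  have hmem : t.inf id ∈ t :=
    chain_inf_mem (hc.mono htsub) ⟨Q0, Finset.mem_filter.mpr ⟨hQ0, hQ0'⟩⟩
  have hTt : phiT σ ∈ t := by
    rw [phiT]; convert hmem using 2
  rw [Finset.mem_filter] at hTt
  refine ⟨hTt.1, hTt.2, fun Q hQ hQ' => ?_⟩
  have : Q ∈ t := Finset.mem_filter.mpr ⟨hQ, hQ'⟩
  have h := Finset.inf_le (f := id) this
  rw [phiT]; convert h using 1; rfl

end Defs
lemma commutator_le_coatom {H : Type*} [Group H] [Finite H] [Group.IsNilpotent H]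
    {M : Subgroup H} (hM : IsCoatom M) : commutator H ≤ M := by
  have q := (isNilpotent_of_finite_tfae (G := H)).out 0 2
  have hnorm : M.Normal := q.mp inferInstance M hM
  set π := QuotientGroup.mk' M with hπ
  have hsurj : Function.Surjective π := QuotientGroup.mk'_surjective M
  have hsub : ∀ S : Subgroup (H ⧸ M), S = ⊥ ∨ S = ⊤ := by
    intro S
    have hle : M ≤ S.comap π := by
      intro x hx
      have : π x = 1 := (QuotientGroup.eq_one_iff x).mpr hx
      simp only [Subgroup.mem_comap, this]
      exact S.one_mem
    rcases hle.lt_or_eq with hlt | heq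
    · right
      have h2 := hM.2 _ hlt
      have h3 := congrArg (Subgroup.map π) h2
      rwa [Subgroup.map_comap_eq_self_of_surjective hsurj, Subgroup.map_top_of_surjective _ hsurj]
        at h3
    · left
      have h3 := congrArg (Subgroup.map π) heq.symm
      rw [Subgroup.map_comap_eq_self_of_surjective hsurj] at h3
      rw [h3]
      ext x
      simp only [Subgroup.mem_map, Subgroup.mem_bot]
      constructor
      · rintro ⟨y, hy, rfl⟩
        exact (QuotientGroup.eq_one_iff y).mpr hy
      · rintro rfl
        exact ⟨1, M.one_mem, map_one π⟩
  have habel : ∀ a b : H ⧸ M, a * b = b * a := by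
    intro a b
    rcases subsingleton_or_nontrivial (H ⧸ M) with hs | hn
    · exact Subsingleton.elim _ _
    · obtain ⟨x, hx⟩ := exists_ne (1 : H ⧸ M)
      have hzp : Subgroup.zpowers x = ⊤ := by
        rcases hsub (Subgroup.zpowers x) with h | h
        · exact absurd (Subgroup.zpowers_eq_bot.mp h) hx
        · exact h
      have ha : a ∈ Subgroup.zpowers x := hzp ▸ Subgroup.mem_top a
      have hb : b ∈ Subgroup.zpowers x := hzp ▸ Subgroup.mem_top b
      obtain ⟨m, rfl⟩ := ha
      obtain ⟨n, rfl⟩ := hb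
      rw [← zpow_add, ← zpow_add, add_comm]
  rw [_root_.commutator_def, Subgroup.commutator_le]
  intro g₁ _ g₂ _
  rw [← QuotientGroup.eq_one_iff (N := M)]
  show (QuotientGroup.mk' M) (g₁ * g₂ * g₁⁻¹ * g₂⁻¹) = 1
  rw [← commutatorElement_def]
  rw [map_commutatorElement]
  exact commutatorElement_eq_one_iff_mul_comm.mpr (habel _ _)

/-- In a finite nilpotent group, a subgroup which together with the commutator subgroup
generates the whole group is the whole group. -/
lemma eq_top_of_sup_commutator_eq_top {H : Type*} [Group H] [Finite H] [Group.IsNilpotent H]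
    {K : Subgroup H} (h : K ⊔ commutator H = ⊤) : K = ⊤ := by
  by_contra hne
  obtain ⟨M, hM, hKM⟩ := (IsCoatomic.eq_top_or_exists_le_coatom K).resolve_left hne
  have h1 : commutator H ≤ M := commutator_le_coatom hM
  have : (⊤ : Subgroup H) ≤ M := h ▸ sup_le hKM h1
  exact hM.1 (top_le_iff.mp this)

lemma sup_commutator_lt {G : Type*} [Group G] [Finite G] {ℓ : ℕ} (hℓ : ℓ.Prime)
    {P B : Subgroup G} (hP : IsPGroup ℓ P) (hB : B < P) : ⁅P, P⁆ ⊔ B < P := by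
  have hcP : ⁅P, P⁆ ≤ P := commutator_le.mpr fun g₁ h₁ g₂ h₂ => by
    exact mul_mem (mul_mem (mul_mem h₁ h₂) (inv_mem h₁)) (inv_mem h₂)
  refine lt_of_le_of_ne (sup_le hcP hB.le) fun heq => ?_
  haveI : Fact ℓ.Prime := ⟨hℓ⟩
  haveI : Group.IsNilpotent ↥P := hP.isNilpotent
  have hmt : Subgroup.map P.subtype ⊤ = P := by
    rw [← Subgroup.subgroupOf_self P, Subgroup.subgroupOf_map_subtype]; exact inf_idem P
  have hmap : Subgroup.map P.subtype ((B.subgroupOf P) ⊔ commutator ↥P) = P := by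
    rw [Subgroup.map_sup, _root_.commutator_def, Subgroup.map_commutator,
      Subgroup.subgroupOf_map_subtype, hmt, inf_eq_left.mpr hB.le, sup_comm, heq]
  have htop : (B.subgroupOf P) ⊔ commutator ↥P = ⊤ := by
    apply Subgroup.map_injective P.subtype_injective
    rw [hmap, hmt]
  have h2 := eq_top_of_sup_commutator_eq_top htop
  rw [Subgroup.subgroupOf_eq_top] at h2
  exact hB.not_ge h2

section Step

variable {G : Type*} [Group G] [Finite G] [DecidableEq (Subgroup G)]

lemma phi_step {ℓ : ℕ} (hℓ : ℓ.Prime) {Z : Subgroup G} {σ : Finset (Subgroup G)}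
    {P : Subgroup G} (hσ : IsEllChain ℓ Z σ) (hP : P ∈ σ) (htop : ∀ Q ∈ σ, Q ≤ P)
    (hna : ¬ AbelianModulo P Z) :
    IsEllChain ℓ Z (phi σ) ∧ (P ∈ phi σ ∧ ∀ Q ∈ phi σ, Q ≤ P) ∧ phi (phi σ) = σ ∧
      ((phi σ).card = σ.card + 1 ∨ σ.card = (phi σ).card + 1) := by
  obtain ⟨hZσ, hmem, hc⟩ := hσ
  have hDeq : phiD σ = ⁅P, P⁆ := phiD_eq hP htop
  have hDZ : ¬ phiD σ ≤ Z := by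
    intro h
    rw [hDeq] at h
    apply hna
    intro p hp q hq
    have h2 := Subgroup.commutator_le.mp h p hp q hq
    rwa [commutatorElement_def] at h2
  have hDP : phiD σ ≤ P := by
    rw [hDeq]
    exact Subgroup.commutator_le.mpr fun g₁ h₁ g₂ h₂ =>
      mul_mem (mul_mem (mul_mem h₁ h₂) (inv_mem h₁)) (inv_mem h₂)
  obtain ⟨hB1, hB2, hB3⟩ := phiB_spec hc ⟨Z, hZσ, hDZ⟩
  obtain ⟨hT1, hT2, hT3⟩ := phiT_spec hc ⟨P, hP, hDP⟩
  set B := phiB σ with hBdef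
  set T := phiT σ with hTdef
  have hBTne : B ≠ T := fun h => hB2 (h ▸ hT2)
  have hBT : B < T := by
    rcases hc (Finset.mem_coe.mpr hB1) (Finset.mem_coe.mpr hT1) hBTne with h | h
    · exact lt_of_le_of_ne h hBTne
    · exact absurd (hT2.trans h) hB2
  have hdich : ∀ Q ∈ σ, Q ≤ B ∨ T ≤ Q := by
    intro Q hQ
    by_cases h : phiD σ ≤ Q
    · exact Or.inr (hT3 Q hQ h)
    · exact Or.inl (hB3 Q hQ h)
  set R := phiD σ ⊔ B with hRdef
  have hRT : R ≤ T := sup_le hT2 hBT.le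
  have hBR : B < R := lt_of_le_of_ne le_sup_right fun h => hB2 (by rw [h]; exact le_sup_left)
  have hTZ : T ≠ Z := fun h => hDZ (h ▸ hT2)
  have hTP : T = P → R < P := by
    intro h
    have hBP : B < P := h ▸ hBT
    have := sup_commutator_lt hℓ (hmem P hP).2 hBP
    rwa [← hDeq] at this
  have hTle : T ≤ P := htop T hT1
  by_cases hlt : R < T
  · -- insert case
    have hRnotin : R ∉ σ := by
      intro hR
      rcases hdich R hR with h | h
      · exact hBR.not_ge h
      · exact hlt.not_ge h
    have hphi : phi σ = insert R σ := by rw [phi, if_pos hlt]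
    have hZR : Z ≤ R := (hmem B hB1).1.trans le_sup_right
    have hpR : IsPGroup ℓ R := ((hmem T hT1).2).to_le hRT
    have hmem' : ∀ X ∈ insert R σ, Z ≤ X ∧ IsPGroup ℓ X := by
      intro X hX
      rcases Finset.mem_insert.mp hX with rfl | hX
      · exact ⟨hZR, hpR⟩
      · exact hmem X hX
    have hc' : IsChain (· ≤ ·) ((insert R σ : Finset (Subgroup G)) : Set (Subgroup G)) := by
      rw [Finset.coe_insert]
      refine hc.insert fun b hb hne => ?_
      rcases hdich b (Finset.mem_coe.mp hb) with h | h
      · exact Or.inr (h.trans hBR.le)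
      · exact Or.inl (hRT.trans h)
    have htop' : ∀ Q ∈ insert R σ, Q ≤ P := by
      intro Q hQ
      rcases Finset.mem_insert.mp hQ with rfl | hQ
      · exact hRT.trans hTle
      · exact htop Q hQ
    have hP' : P ∈ insert R σ := Finset.mem_insert_of_mem hP
    -- compute phi of the new chain
    have hD' : phiD (insert R σ) = phiD σ := by rw [phiD_eq hP' htop', hDeq]
    have hB' : phiB (insert R σ) = B := by
      refine phiB_eq (Finset.mem_insert_of_mem hB1) (by rw [hD']; exact hB2) ?_
      intro Q hQ hQ'
      rw [hD'] at hQ'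
      rcases Finset.mem_insert.mp hQ with rfl | hQ
      · exact absurd le_sup_left hQ'
      · exact hB3 Q hQ hQ'
    have hT' : phiT (insert R σ) = R := by
      refine phiT_eq (Finset.mem_insert_self R σ) (by rw [hD']; exact le_sup_left) ?_
      intro Q hQ hQ'
      rw [hD'] at hQ'
      rcases Finset.mem_insert.mp hQ with rfl | hQ
      · exact le_rfl
      · exact hRT.trans (hT3 Q hQ hQ')
    have hcond : ¬ (phiD (insert R σ) ⊔ phiB (insert R σ) < phiT (insert R σ)) := by
      rw [hD', hB', hT']
      exact lt_irrefl R
    have hinv : phi (insert R σ) = σ := by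
      rw [phi, if_neg hcond, hT', Finset.erase_insert hRnotin]
    rw [hphi]
    exact ⟨⟨Finset.mem_insert_of_mem hZσ, hmem', hc'⟩, ⟨hP', htop'⟩, hinv,
      Or.inl (Finset.card_insert_of_notMem hRnotin)⟩
  · -- erase case
    have hRTeq : R = T := hRT.lt_or_eq.resolve_left hlt
    have hTPne : T ≠ P := fun h => hlt (lt_of_lt_of_le (hTP h) (le_of_eq h.symm))
    have hphi : phi σ = σ.erase T := by rw [phi, if_neg hlt]
    have hZ' : Z ∈ σ.erase T := Finset.mem_erase.mpr ⟨hTZ.symm, hZσ⟩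
    have hmem' : ∀ X ∈ σ.erase T, Z ≤ X ∧ IsPGroup ℓ X := fun X hX =>
      hmem X (Finset.mem_of_mem_erase hX)
    have hc' : IsChain (· ≤ ·) ((σ.erase T : Finset (Subgroup G)) : Set (Subgroup G)) := by
      refine hc.mono ?_
      intro x hx
      exact Finset.mem_coe.mpr (Finset.mem_of_mem_erase (Finset.mem_coe.mp hx))
    have hP' : P ∈ σ.erase T := Finset.mem_erase.mpr ⟨fun h => hTPne h.symm, hP⟩
    have htop' : ∀ Q ∈ σ.erase T, Q ≤ P := fun Q hQ => htop Q (Finset.mem_of_mem_erase hQ)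
    have hD' : phiD (σ.erase T) = phiD σ := by rw [phiD_eq hP' htop', hDeq]
    have hB' : phiB (σ.erase T) = B := by
      refine phiB_eq (Finset.mem_erase.mpr ⟨hBTne, hB1⟩) (by rw [hD']; exact hB2) ?_
      intro Q hQ hQ'
      rw [hD'] at hQ'
      exact hB3 Q (Finset.mem_of_mem_erase hQ) hQ'
    obtain ⟨hT'1, hT'2, hT'3⟩ := phiT_spec hc' ⟨P, hP', by rw [hD']; exact hDP⟩
    have hTT' : T < phiT (σ.erase T) := by
      obtain ⟨hne, hmemσ⟩ := Finset.mem_erase.mp hT'1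
      have h2 : phiD σ ≤ phiT (σ.erase T) := by rw [← hD']; exact hT'2
      exact lt_of_le_of_ne (hT3 _ hmemσ h2) (Ne.symm hne)
    have hcond : phiD (σ.erase T) ⊔ phiB (σ.erase T) < phiT (σ.erase T) := by
      rw [hD', hB', ← hRdef, hRTeq]
      exact hTT'
    have hinv : phi (σ.erase T) = σ := by
      rw [phi, if_pos hcond, hD', hB', ← hRdef, hRTeq, Finset.insert_erase hT1]
    rw [hphi]
    exact ⟨⟨hZ', hmem', hc'⟩, ⟨hP', htop'⟩, hinv,
      Or.inr ((Finset.card_erase_add_one hT1).symm)⟩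

end Step

section Equiv

variable {G : Type*} [Group G] [Finite G] [DecidableEq (Subgroup G)]

lemma phi_equivariant {ℓ : ℕ} (hℓ : ℓ.Prime) {Z : Subgroup G} {σ : Finset (Subgroup G)}
    {P : Subgroup G} (hσ : IsEllChain ℓ Z σ) (hP : P ∈ σ) (htop : ∀ Q ∈ σ, Q ≤ P)
    (hna : ¬ AbelianModulo P Z) (α : MulAut G) :
    phi (σ.image (Subgroup.map α.toMonoidHom)) = (phi σ).image (Subgroup.map α.toMonoidHom) := by
  obtain ⟨hZσ, hmem, hc⟩ := hσ
  have hDeq : phiD σ = ⁅P, P⁆ := phiD_eq hP htop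
  have hDZ : ¬ phiD σ ≤ Z := by
    intro h
    rw [hDeq] at h
    apply hna
    intro p hp q hq
    have h2 := Subgroup.commutator_le.mp h p hp q hq
    rwa [commutatorElement_def] at h2
  have hDP : phiD σ ≤ P := by
    rw [hDeq]
    exact Subgroup.commutator_le.mpr fun g₁ h₁ g₂ h₂ =>
      mul_mem (mul_mem (mul_mem h₁ h₂) (inv_mem h₁)) (inv_mem h₂)
  obtain ⟨hB1, hB2, hB3⟩ := phiB_spec hc ⟨Z, hZσ, hDZ⟩
  obtain ⟨hT1, hT2, hT3⟩ := phiT_spec hc ⟨P, hP, hDP⟩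
  set B := phiB σ with hBdef
  set T := phiT σ with hTdef
  set f : Subgroup G → Subgroup G := Subgroup.map α.toMonoidHom with hfdef
  have hainj : Function.Injective (⇑α.toMonoidHom) := α.injective
  have hinj : Function.Injective f := Subgroup.map_injective hainj
  have hle : ∀ X Y : Subgroup G, f X ≤ f Y ↔ X ≤ Y := fun X Y =>
    Subgroup.map_le_map_iff_of_injective hainj
  set τ := σ.image f with hτdef
  have hPτ : f P ∈ τ := Finset.mem_image_of_mem f hP
  have htopτ : ∀ Q' ∈ τ, Q' ≤ f P := by
    intro Q' hQ'
    obtain ⟨Q, hQ, rfl⟩ := Finset.mem_image.mp hQ'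
    exact (hle Q P).mpr (htop Q hQ)
  have hDτ : phiD τ = f (phiD σ) := by
    rw [phiD_eq hPτ htopτ, hDeq, hfdef]
    exact (Subgroup.map_commutator P P α.toMonoidHom).symm
  have hBτ : phiB τ = f B := by
    refine phiB_eq (Finset.mem_image_of_mem f hB1) ?_ ?_
    · rw [hDτ]
      exact fun h => hB2 ((hle _ _).mp h)
    · intro Q' hQ' h
      obtain ⟨Q, hQ, rfl⟩ := Finset.mem_image.mp hQ'
      rw [hDτ] at h
      exact (hle Q B).mpr (hB3 Q hQ fun hd => h ((hle _ _).mpr hd))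
  have hTτ : phiT τ = f T := by
    refine phiT_eq (Finset.mem_image_of_mem f hT1) ?_ ?_
    · rw [hDτ]
      exact (hle _ _).mpr hT2
    · intro Q' hQ' h
      obtain ⟨Q, hQ, rfl⟩ := Finset.mem_image.mp hQ'
      rw [hDτ] at h
      exact (hle T Q).mpr (hT3 Q hQ ((hle _ _).mp h))
  have hsupτ : phiD τ ⊔ phiB τ = f (phiD σ ⊔ B) := by
    rw [hDτ, hBτ, hfdef]
    exact (Subgroup.map_sup _ _ _).symm
  by_cases hlt : phiD σ ⊔ B < T
  · have hltτ : phiD τ ⊔ phiB τ < phiT τ := by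
      rw [hsupτ, hTτ]
      exact lt_of_le_of_ne ((hle _ _).mpr hlt.le) fun h => hlt.ne (hinj h)
    rw [phi, if_pos hltτ, hsupτ, phi, if_pos hlt, Finset.image_insert, hτdef]
  · have hltτ : ¬ (phiD τ ⊔ phiB τ < phiT τ) := by
      rw [hsupτ, hTτ]
      exact fun h => hlt (lt_of_le_of_ne ((hle _ _).mp h.le) fun h2 => h.ne (congrArg f h2))
    rw [phi, if_neg hltτ, hTτ, phi, if_neg hlt, hτdef, Finset.image_erase hinj]

end Equiv


/-- Existence of an equivariant alternation of the subcomplex of chains with abelian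
quotients `P/Z` inside the complex of all chains of `ℓ`-subgroups starting at a central
`ℓ`-subgroup `Z`: an involution `φ`, commuting with every automorphism of `G`
stabilizing `Z`, defined on chains whose top term `P` has non-abelian quotient `P/Z`,
changing the length by exactly one and preserving the top term. -/
theorem stmt_4 {G : Type*} [Group G] [Finite G] [DecidableEq (Subgroup G)]
    (ℓ : ℕ) (hℓ : ℓ.Prime) (hdvd : ℓ ∣ Nat.card G)
    (Z : Subgroup G) (hZc : Z ≤ Subgroup.center G) (hZp : IsPGroup ℓ Z) :
    ∃ φ : Finset (Subgroup G) → Finset (Subgroup G),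
      ∀ σ : Finset (Subgroup G), IsEllChain ℓ Z σ →
        ∀ P ∈ σ, (∀ Q ∈ σ, Q ≤ P) → ¬ AbelianModulo P Z →
          IsEllChain ℓ Z (φ σ) ∧
          (P ∈ φ σ ∧ ∀ Q ∈ φ σ, Q ≤ P) ∧
          φ (φ σ) = σ ∧
          ((φ σ).card = σ.card + 1 ∨ σ.card = (φ σ).card + 1) ∧
          ∀ α : MulAut G, Subgroup.map α.toMonoidHom Z = Z →
            φ (σ.image (Subgroup.map α.toMonoidHom)) =
              (φ σ).image (Subgroup.map α.toMonoidHom) := by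
  refine ⟨phi, ?_⟩
  intro σ hσ P hP htop hna
  obtain ⟨h1, h2, h3, h4⟩ := phi_step hℓ hσ hP htop hna
  exact ⟨h1, h2, h3, h4, fun α _ => phi_equivariant hℓ hσ hP htop hna α⟩
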